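/- Deleting a δ-edge from a fuzzy graph does not change the strong domination index: if ab is a δ-edge of X then SDI(X) = SDI(X \ ab). -/

import Mathlib

open Finset

/-- A fuzzy graph on vertex type `V`. -/
structure FuzzyGraph (V : Type*) where
  ρ : V → ℝ
  υ : V → V → ℝ
  ρ_nonneg : ∀ a, 0 ≤ ρ a
  ρ_le_one : ∀ a, ρ a ≤ 1
  υ_nonneg : ∀ a b, 0 ≤ υ a b
  symm : ∀ a b, υ a b = υ b a
  υ_le : ∀ a b, υ a b ≤ min (ρ a) (ρ b)
  loopless : ∀ a, υ a a = 0

namespace FuzzyGraph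

variable {V : Type*} [Fintype V] [DecidableEq V]

/-- Strength of a path given by its list of successive vertices:
the minimum of the weights of its edges. -/
def pathStrength (X : FuzzyGraph V) : List V → ℝ
  | [] => 0
  | [_] => 0
  | [a, b] => X.υ a b
  | a :: b :: c :: l => min (X.υ a b) (X.pathStrength (b :: c :: l))

/-- `l` is a path from `a` to `b` : distinct vertices joined by positive-weight edges. -/
def IsPath (X : FuzzyGraph V) (a b : V) (l : List V) : Prop :=
  l.Nodup ∧ l.head? = some a ∧ l.getLast? = some b ∧ 2 ≤ l.length ∧
    l.Chain' (fun x y => 0 < X.υ x y)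

/-- Strength of connectedness between two vertices: maximum strength of a path. -/
noncomputable def conn (X : FuzzyGraph V) (a b : V) : ℝ :=
  sSup {s | ∃ l : List V, X.IsPath a b l ∧ s = X.pathStrength l}

/-- Delete the edge `ab` (set its weight to `0`). -/
def deleteEdge (X : FuzzyGraph V) (a b : V) : FuzzyGraph V where
  ρ := X.ρ
  υ x y := if (x = a ∧ y = b) ∨ (x = b ∧ y = a) then 0 else X.υ x y
  ρ_nonneg := X.ρ_nonneg
  ρ_le_one := X.ρ_le_one
  υ_nonneg := by
    intro x y; split_ifs
    · exact le_rfl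
    · exact X.υ_nonneg x y
  symm := by
    intro x y
    by_cases h : (x = a ∧ y = b) ∨ (x = b ∧ y = a)
    · rw [if_pos h, if_pos (by tauto)]
    · rw [if_neg h, if_neg (by tauto), X.symm]
  υ_le := by
    intro x y; split_ifs
    · exact le_min (X.ρ_nonneg x) (X.ρ_nonneg y)
    · exact X.υ_le x y
  loopless := by
    intro x; split_ifs
    · rfl
    · exact X.loopless x

/-- `ab` is a strong edge (α- or β-strong). -/
def StrongEdge (X : FuzzyGraph V) (a b : V) : Prop :=
  0 < X.υ a b ∧ (X.deleteEdge a b).conn a b ≤ X.υ a b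

/-- `ab` is an α-strong edge. -/
def AlphaStrong (X : FuzzyGraph V) (a b : V) : Prop :=
  0 < X.υ a b ∧ (X.deleteEdge a b).conn a b < X.υ a b

/-- `ab` is a β-strong edge. -/
def BetaStrong (X : FuzzyGraph V) (a b : V) : Prop :=
  0 < X.υ a b ∧ X.υ a b = (X.deleteEdge a b).conn a b

/-- `ab` is a δ-edge. -/
def DeltaEdge (X : FuzzyGraph V) (a b : V) : Prop :=
  0 < X.υ a b ∧ X.υ a b < (X.deleteEdge a b).conn a b

/-- The minimum weight of a strong edge incident at `a`. -/
noncomputable def minInc (X : FuzzyGraph V) (a : V) : ℝ :=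
  sInf {w | ∃ b, X.StrongEdge a b ∧ w = X.υ a b}

/-- The weight of a set of vertices. -/
noncomputable def weight (X : FuzzyGraph V) (S : Finset V) : ℝ :=
  ∑ a ∈ S, X.minInc a

/-- `D` is a strong dominating set. -/
def IsSDS (X : FuzzyGraph V) (D : Finset V) : Prop :=
  ∀ v, v ∉ D → ∃ a ∈ D, X.StrongEdge a v

/-- `D` is a minimal strong dominating set. -/
def IsMinimalSDS (X : FuzzyGraph V) (D : Finset V) : Prop :=
  X.IsSDS D ∧ ∀ a ∈ D, ¬ X.IsSDS (D.erase a)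

/-- `D` is a minimum (least weight) strong dominating set. -/
def IsMinimumSDS (X : FuzzyGraph V) (D : Finset V) : Prop :=
  X.IsSDS D ∧ ∀ D' : Finset V, X.IsSDS D' → X.weight D ≤ X.weight D'

/-- The strong domination degree of a vertex. -/
noncomputable def sd (X : FuzzyGraph V) (u : V) : ℝ :=
  sInf {w | ∃ D : Finset V, X.IsMinimalSDS D ∧ u ∈ D ∧ w = X.weight D}

/-- The strong domination number. -/
noncomputable def gammaS (X : FuzzyGraph V) : ℝ :=
  sInf {w | ∃ D : Finset V, X.IsSDS D ∧ w = X.weight D}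

/-- The upper strong domination number. -/
noncomputable def GammaS (X : FuzzyGraph V) : ℝ :=
  sSup {w | ∃ D : Finset V, X.IsMinimalSDS D ∧ w = X.weight D}

/-- The strong domination index. -/
noncomputable def SDI (X : FuzzyGraph V) : ℝ := ∑ u : V, X.sd u

/-- `X` is connected. -/
def Connected (X : FuzzyGraph V) : Prop := ∀ a b : V, a ≠ b → ∃ l, X.IsPath a b l

/-- `X` is a strong fuzzy graph: every edge is strong. -/
def IsStrongFG (X : FuzzyGraph V) : Prop := ∀ a b, 0 < X.υ a b → X.StrongEdge a b

/-- Underlying (support) simple graph. -/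
def support (X : FuzzyGraph V) : SimpleGraph V where
  Adj a b := 0 < X.υ a b
  symm := ⟨by intro a b h; rw [X.symm]; exact h⟩
  loopless := ⟨by intro a h; rw [X.loopless] at h; exact lt_irrefl 0 h⟩

/-- `X` is a fuzzy tree. -/
def IsFuzzyTree (X : FuzzyGraph V) : Prop :=
  ∃ F : FuzzyGraph V, F.ρ = X.ρ ∧ (∀ a b, F.υ a b = X.υ a b ∨ F.υ a b = 0) ∧
    F.support.IsTree ∧ ∀ a b, 0 < X.υ a b → F.υ a b = 0 → X.υ a b < F.conn a b

/-- The size of a fuzzy graph: the sum of all edge weights. -/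
noncomputable def size (X : FuzzyGraph V) : ℝ := (∑ a : V, ∑ b : V, X.υ a b) / 2

/-- The underlying graph of `X` is a cycle. -/
def IsCycleGraph (X : FuzzyGraph V) : Prop :=
  ∃ n : ℕ, 3 ≤ n ∧ ∃ f : ZMod n ≃ V,
    ∀ x y : V, 0 < X.υ x y ↔ ∃ i : ZMod n, (x = f i ∧ y = f (i + 1)) ∨ (x = f (i + 1) ∧ y = f i)

/-- `X` is a fuzzy cycle: a cycle with at least two edges of minimum weight. -/
def IsFuzzyCycle (X : FuzzyGraph V) : Prop :=
  X.IsCycleGraph ∧ ∃ a b c d : V, 0 < X.υ a b ∧ 0 < X.υ c d ∧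
    Sym2.mk (a, b) ≠ Sym2.mk (c, d) ∧ X.υ a b = X.υ c d ∧
    ∀ x y, 0 < X.υ x y → X.υ a b ≤ X.υ x y

/-- A set of pairwise fuzzy independent vertices. -/
def IsFuzzyIndep (X : FuzzyGraph V) (S : Finset V) : Prop :=
  ∀ a ∈ S, ∀ b ∈ S, a ≠ b → ¬ X.StrongEdge a b

/-- The strong independent domination number. -/
noncomputable def iS (X : FuzzyGraph V) : ℝ :=
  sInf {w | ∃ D : Finset V, X.IsSDS D ∧ X.IsFuzzyIndep D ∧ w = X.weight D}

/-- The strong independence number. -/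
noncomputable def betaS (X : FuzzyGraph V) : ℝ :=
  sSup {w | ∃ S : Finset V, X.IsFuzzyIndep S ∧ w = X.weight S}

/-- Closed strong neighborhood. -/
def closedNbhd (X : FuzzyGraph V) (a : V) : Set V := insert a {b | X.StrongEdge a b}

/-- Open strong neighborhood. -/
def openNbhd (X : FuzzyGraph V) (a : V) : Set V := {b | X.StrongEdge a b}

/-- Private neighborhood of `a` with respect to `S`. -/
def privNbhd (X : FuzzyGraph V) (a : V) (S : Finset V) : Set V :=
  X.closedNbhd a \ ⋃ b ∈ S.erase a, X.closedNbhd b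

/-- `S` is a fuzzy irredundant set. -/
def IsIrredundant (X : FuzzyGraph V) (S : Finset V) : Prop :=
  ∀ a ∈ S, (X.privNbhd a S).Nonempty

/-- `S` is a maximal fuzzy irredundant set. -/
def IsMaximalIrredundant (X : FuzzyGraph V) (S : Finset V) : Prop :=
  X.IsIrredundant S ∧ ∀ v ∉ S, ¬ X.IsIrredundant (insert v S)

/-- The strong irredundance number. -/
noncomputable def irS (X : FuzzyGraph V) : ℝ :=
  sInf {w | ∃ S : Finset V, X.IsMaximalIrredundant S ∧ w = X.weight S}

end FuzzyGraph

set_option linter.unusedSectionVars false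

namespace FuzzyGraph

variable {V : Type*} [Fintype V] [DecidableEq V]

lemma ext'' {X Y : FuzzyGraph V} (hρ : X.ρ = Y.ρ) (hυ : X.υ = Y.υ) : X = Y := by
  cases X; cases Y; simp_all

lemma chain'_and' {R S : V → V → Prop} : ∀ {l : List V},
    l.Chain' R → l.Chain' S → l.Chain' (fun u v => R u v ∧ S u v)
  | [], _, _ => List.isChain_nil
  | [_], _, _ => List.isChain_singleton _
  | _ :: _ :: _, hR, hS => by
    unfold List.Chain' at hR hS ⊢
    rw [List.isChain_cons_cons] at hR hS ⊢
    exact ⟨⟨hR.1, hS.1⟩, chain'_and' hR.2 hS.2⟩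

lemma list_shape {l : List V} (h : 2 ≤ l.length) : ∃ u v t, l = u :: v :: t := by
  match l with
  | [] => simp at h
  | [_] => simp at h
  | u :: v :: t => exact ⟨u, v, t, rfl⟩

lemma le_pathStrength_iff (X : FuzzyGraph V) (c : ℝ) :
    ∀ l : List V, 2 ≤ l.length →
      (c ≤ X.pathStrength l ↔ l.Chain' (fun u v => c ≤ X.υ u v))
  | [], h => by simp at h
  | [_], h => by simp at h
  | [u, v], _ => by
      simp [pathStrength, List.isChain_pair, List.Chain']
  | u :: v :: w :: t, _ => by
      rw [show X.pathStrength (u :: v :: w :: t)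
            = min (X.υ u v) (X.pathStrength (v :: w :: t)) from rfl,
        le_min_iff,
        le_pathStrength_iff X c (v :: w :: t) (by simp)]
      unfold List.Chain'
      exact (List.isChain_cons_cons (R := fun u v => c ≤ X.υ u v)).symm

lemma pathStrength_le_head (X : FuzzyGraph V) (u v : V) (t : List V) :
    X.pathStrength (u :: v :: t) ≤ X.υ u v := by
  have h := (le_pathStrength_iff X (X.pathStrength (u :: v :: t)) _ (by simp)).mp le_rfl
  exact (List.isChain_cons_cons.mp h).1

lemma connSet_bddAbove (X : FuzzyGraph V) (a b : V) :
    BddAbove {s | ∃ l : List V, X.IsPath a b l ∧ s = X.pathStrength l} := by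
  refine ⟨1, ?_⟩
  rintro s ⟨l, hl, rfl⟩
  obtain ⟨u, v, t, rfl⟩ := list_shape hl.2.2.2.1
  exact (X.pathStrength_le_head u v t).trans
    ((X.υ_le u v).trans ((min_le_left _ _).trans (X.ρ_le_one u)))

lemma conn_nonneg (X : FuzzyGraph V) (a b : V) : 0 ≤ X.conn a b := by
  refine Real.sSup_nonneg ?_
  rintro s ⟨l, hl, rfl⟩
  exact (le_pathStrength_iff X 0 l hl.2.2.2.1).mpr
    (hl.2.2.2.2.imp fun _ _ h => h.le)

lemma le_conn (X : FuzzyGraph V) {a b : V} {l : List V} (h : X.IsPath a b l) :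
    X.pathStrength l ≤ X.conn a b :=
  le_csSup (X.connSet_bddAbove a b) ⟨l, h, rfl⟩

lemma conn_le (X : FuzzyGraph V) {a b : V} {c : ℝ} (hc : 0 ≤ c)
    (h : ∀ l, X.IsPath a b l → X.pathStrength l ≤ c) : X.conn a b ≤ c := by
  refine Real.sSup_le ?_ hc
  rintro s ⟨l, hl, rfl⟩
  exact h l hl

lemma exists_path_of_lt_conn (X : FuzzyGraph V) {a b : V} {c : ℝ} (hc : 0 ≤ c)
    (h : c < X.conn a b) : ∃ l, X.IsPath a b l ∧ c < X.pathStrength l := by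
  by_contra h'
  push_neg at h'
  exact absurd (X.conn_le hc h') (not_le.mpr h)

end FuzzyGraph
namespace FuzzyGraph

variable {V : Type*} [Fintype V] [DecidableEq V]

lemma pathStrength_reverse (X : FuzzyGraph V) {l : List V} (hl : 2 ≤ l.length) :
    X.pathStrength l.reverse = X.pathStrength l := by
  have h2 : 2 ≤ l.reverse.length := by simpa using hl
  have key : ∀ c : ℝ, c ≤ X.pathStrength l.reverse ↔ c ≤ X.pathStrength l := by
    intro c
    rw [le_pathStrength_iff X c l.reverse h2, le_pathStrength_iff X c l hl]
    unfold List.Chain'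
    rw [
      List.isChain_reverse]
    have hsymm : ∀ u v : V, c ≤ X.υ u v ↔ c ≤ X.υ v u := fun u v => by rw [X.symm]
    constructor
    · exact fun h => h.imp fun u v h' => (hsymm u v).mpr h'
    · exact fun h => h.imp fun u v h' => (hsymm v u).mpr h'
  exact le_antisymm ((key _).mp le_rfl) ((key _).mpr le_rfl)

lemma getLast?_eq_mem {l : List V} {y : V} (h : l.getLast? = some y) : y ∈ l := by
  obtain ⟨hne, hy⟩ := List.mem_getLast?_eq_getLast (by rw [h]; rfl)
  rw [hy]; exact List.getLast_mem hne

lemma isPath_reverse (X : FuzzyGraph V) {a b : V} {l : List V} (h : X.IsPath a b l) :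
    X.IsPath b a l.reverse := by
  obtain ⟨h1, h2, h3, h4, h5⟩ := h
  refine ⟨List.nodup_reverse.mpr h1, ?_, ?_, by simpa using h4, ?_⟩
  · rw [List.head?_reverse]; exact h3
  · rw [← List.head?_reverse, List.reverse_reverse]; exact h2
  · unfold List.Chain'
    rw [List.isChain_reverse]
    exact h5.imp fun u v h' => by rw [X.symm] at h'; exact h'

lemma conn_symm (X : FuzzyGraph V) (a b : V) : X.conn a b = X.conn b a := by
  unfold conn
  congr 1
  ext s
  constructor
  · rintro ⟨l, hl, rfl⟩
    exact ⟨l.reverse, X.isPath_reverse hl, (X.pathStrength_reverse hl.2.2.2.1).symm⟩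
  · rintro ⟨l, hl, rfl⟩
    exact ⟨l.reverse, X.isPath_reverse hl, (X.pathStrength_reverse hl.2.2.2.1).symm⟩

lemma deleteEdge_υ (X : FuzzyGraph V) (a b u v : V) :
    (X.deleteEdge a b).υ u v = if (u = a ∧ v = b) ∨ (u = b ∧ v = a) then 0 else X.υ u v := rfl

lemma deleteEdge_υ_of_ne (X : FuzzyGraph V) {a b u v : V}
    (h : ¬ ((u = a ∧ v = b) ∨ (u = b ∧ v = a))) : (X.deleteEdge a b).υ u v = X.υ u v :=
  if_neg h

lemma deleteEdge_symm' (X : FuzzyGraph V) (a b : V) :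
    X.deleteEdge a b = X.deleteEdge b a := by
  refine ext'' rfl ?_
  funext u v
  rw [deleteEdge_υ, deleteEdge_υ]
  exact if_congr (by tauto) rfl rfl

lemma deleteEdge_comm (X : FuzzyGraph V) (a b x y : V) :
    (X.deleteEdge a b).deleteEdge x y = (X.deleteEdge x y).deleteEdge a b := by
  refine ext'' rfl ?_
  funext u v
  rw [deleteEdge_υ, deleteEdge_υ, deleteEdge_υ, deleteEdge_υ]
  split_ifs <;> rfl

lemma conn_anti {X Y : FuzzyGraph V} (hle : ∀ u v, Y.υ u v ≤ X.υ u v) (a b : V) :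
    Y.conn a b ≤ X.conn a b := by
  refine Y.conn_le (X.conn_nonneg a b) ?_
  rintro l hl
  have hlen := hl.2.2.2.1
  have hlX : X.IsPath a b l :=
    ⟨hl.1, hl.2.1, hl.2.2.1, hlen, hl.2.2.2.2.imp fun u v h => lt_of_lt_of_le h (hle u v)⟩
  have hps : Y.pathStrength l ≤ X.pathStrength l :=
    (le_pathStrength_iff X _ l hlen).mpr
      (((le_pathStrength_iff Y _ l hlen).mp le_rfl).imp fun u v h => h.trans (hle u v))
  exact hps.trans (X.le_conn hlX)

end FuzzyGraph
namespace FuzzyGraph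

variable {V : Type*} [Fintype V] [DecidableEq V]

/-- A walk: possibly repeating vertices, consecutive pairs satisfy `R`. -/
def IsWalk (R : V → V → Prop) (x y : V) (w : List V) : Prop :=
  w.head? = some x ∧ w.getLast? = some y ∧ w.Chain' R

lemma isWalk_single {R : V → V → Prop} (x : V) : IsWalk R x x [x] :=
  ⟨rfl, rfl, List.isChain_singleton x⟩

lemma isWalk_pair {R : V → V → Prop} {x y : V} (h : R x y) : IsWalk R x y [x, y] :=
  ⟨rfl, rfl, List.isChain_pair.mpr h⟩

lemma isWalk_trans {R : V → V → Prop} {x y z : V} {w₁ w₂ : List V}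
    (h₁ : IsWalk R x y w₁) (h₂ : IsWalk R y z w₂) : ∃ w, IsWalk R x z w := by
  obtain ⟨hh₁, hl₁, hc₁⟩ := h₁
  obtain ⟨hh₂, hl₂, hc₂⟩ := h₂
  obtain ⟨t, rfl⟩ : ∃ t, w₂ = y :: t := by
    cases w₂ with
    | nil => simp at hh₂
    | cons u t =>
      have hu : u = y := by simpa using hh₂
      exact ⟨t, by rw [hu]⟩
  refine ⟨w₁ ++ t, ?_, ?_, ?_⟩
  · rw [List.head?_append, hh₁]; rfl
  · cases t with
    | nil => simpa using hl₁.trans (by simpa using hl₂)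
    | cons c t' =>
      rw [List.getLast?_append_of_ne_nil _ (by simp)]
      rw [List.getLast?_cons_cons] at hl₂
      exact hl₂
  · unfold List.Chain'
    rw [List.isChain_append]
    refine ⟨hc₁, hc₂.tail, ?_⟩
    intro p hp q hq
    rw [hl₁] at hp
    obtain rfl : y = p := by simpa using hp
    exact (List.isChain_cons.mp hc₂).1 q hq

lemma isWalk_reverse {R : V → V → Prop} (hR : ∀ u v, R u v → R v u) {x y : V} {w : List V}
    (h : IsWalk R x y w) : IsWalk R y x w.reverse := by
  obtain ⟨hh, hl, hc⟩ := h
  refine ⟨?_, ?_, ?_⟩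
  · rw [List.head?_reverse]; exact hl
  · rw [← List.head?_reverse, List.reverse_reverse]; exact hh
  · unfold List.Chain'
    rw [List.isChain_reverse]
    exact hc.imp fun u v h' => hR u v h'

lemma isWalk_of_chain' {R S : V → V → Prop}
    (hedge : ∀ u v, S u v → ∃ w, IsWalk R u v w) :
    ∀ (l : List V) (x y : V), l.head? = some x → l.getLast? = some y → l.Chain' S →
      ∃ w, IsWalk R x y w
  | [], x, y, hh, _, _ => by simp at hh
  | [u], x, y, hh, hl, _ => by
      have h1 : u = x := by simpa using hh
      have h2 : u = y := by simpa using hl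
      exact ⟨[u], by simp [h1], by simp [h2], List.isChain_singleton u⟩
  | u :: v :: t, x, y, hh, hl, hc => by
      have h1 : u = x := by simpa using hh
      unfold List.Chain' at hc
      rw [List.isChain_cons_cons] at hc
      obtain ⟨w₁, hw₁⟩ := hedge u v hc.1
      obtain ⟨w₂, hw₂⟩ := isWalk_of_chain' hedge (v :: t) v y rfl
        (by rw [List.getLast?_cons_cons] at hl; exact hl) hc.2
      exact h1 ▸ isWalk_trans hw₁ hw₂

lemma isWalk_dedup {R : V → V → Prop} :
    ∀ (n : ℕ) (w : List V), w.length ≤ n → ∀ (x y : V), IsWalk R x y w →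
      ∃ p, p.Nodup ∧ IsWalk R x y p ∧ ∀ v ∈ p, v ∈ w := by
  intro n
  induction n with
  | zero =>
    intro w hw x y h
    rw [Nat.le_zero, List.length_eq_zero_iff] at hw
    subst hw
    simp [IsWalk] at h
  | succ n ih =>
    intro w hw x y h
    obtain ⟨hh, hl, hc⟩ := h
    obtain ⟨u, t, rfl⟩ : ∃ u t, w = u :: t := by
      cases w with
      | nil => simp at hh
      | cons u t => exact ⟨u, t, rfl⟩
    obtain rfl : x = u := by simpa using hh.symm
    by_cases hx : x ∈ t
    · obtain ⟨t₁, t₂, rfl⟩ := List.append_of_mem hx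
      have hshort : (x :: t₂).length ≤ n := by
        simp only [List.length_cons, List.length_append] at hw ⊢
        omega
      have hwalk : IsWalk R x y (x :: t₂) := by
        refine ⟨rfl, ?_, ?_⟩
        · rw [show x :: (t₁ ++ x :: t₂) = (x :: t₁) ++ x :: t₂ by simp,
            List.getLast?_append_cons] at hl
          exact hl
        · refine hc.suffix ?_
          rw [show x :: (t₁ ++ x :: t₂) = (x :: t₁) ++ x :: t₂ by simp]
          exact List.suffix_append _ _
      obtain ⟨p, hnd, hwp, hsub⟩ := ih (x :: t₂) hshort x y hwalk
      refine ⟨p, hnd, hwp, fun v hv => ?_⟩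
      rcases List.mem_cons.mp (hsub v hv) with rfl | h
      · simp
      · simp [List.mem_append, h]
    · cases t with
      | nil =>
        have h2 : y = x := by simpa using hl.symm
        exact ⟨[x], by simp, by rw [h2]; exact isWalk_single x, by simp⟩
      | cons v t' =>
        have hwalk : IsWalk R v y (v :: t') :=
          ⟨rfl, by rw [List.getLast?_cons_cons] at hl; exact hl, hc.tail⟩
        have hshort : (v :: t').length ≤ n := by
          simp only [List.length_cons] at hw ⊢
          omega
        obtain ⟨p, hnd, hwp, hsub⟩ := ih (v :: t') hshort v y hwalk
        obtain ⟨hph, hpl, hpc⟩ := hwp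
        refine ⟨x :: p, ?_, ⟨rfl, ?_, ?_⟩, ?_⟩
        · rw [List.nodup_cons]
          exact ⟨fun hmem => hx (hsub x hmem), hnd⟩
        · cases p with
          | nil => simp at hph
          | cons q p' => rw [List.getLast?_cons_cons]; exact hpl
        · unfold List.Chain'
          rw [List.isChain_cons]
          refine ⟨fun q hq => ?_, hpc⟩
          rw [hph] at hq
          obtain rfl : v = q := by simpa using hq
          exact (List.isChain_cons_cons.mp hc).1
        · intro q hq
          rcases List.mem_cons.mp hq with rfl | h
          · simp
          · simp [hsub q h]

lemma head_ne_last_of_path (X : FuzzyGraph V) {a b : V} {l : List V}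
    (h : X.IsPath a b l) : a ≠ b := by
  obtain ⟨hnd, hh, hl, hlen, _⟩ := h
  obtain ⟨u, v, t, rfl⟩ := list_shape hlen
  obtain rfl : u = a := by simpa using hh
  rw [List.getLast?_cons_cons] at hl
  have hb : b ∈ v :: t := getLast?_eq_mem hl
  rw [List.nodup_cons] at hnd
  exact fun hab => hnd.1 (hab ▸ hb)

lemma isWalk_to_path {R : V → V → Prop} {x y : V} {w : List V}
    (h : IsWalk R x y w) (hxy : x ≠ y) :
    ∃ p : List V, p.Nodup ∧ p.head? = some x ∧ p.getLast? = some y ∧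
      2 ≤ p.length ∧ p.Chain' R := by
  obtain ⟨p, hnd, ⟨hh, hl, hc⟩, _⟩ := isWalk_dedup w.length w le_rfl x y h
  refine ⟨p, hnd, hh, hl, ?_, hc⟩
  match p, hh, hl with
  | [u], hh, hl =>
    obtain rfl : x = u := by simpa using hh.symm
    obtain rfl : y = x := by simpa using hl.symm
    exact absurd rfl hxy
  | u :: v :: t, _, _ => simp

end FuzzyGraph
namespace FuzzyGraph

variable {V : Type*} [Fintype V] [DecidableEq V]

lemma strongEdge_deleteEdge_iff {X : FuzzyGraph V} {a b : V} (h : X.DeltaEdge a b) (x y : V) :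
    X.StrongEdge x y ↔ (X.deleteEdge a b).StrongEdge x y := by
  by_cases hm : (x = a ∧ y = b) ∨ (x = b ∧ y = a)
  · refine iff_of_false ?_ ?_
    · rcases hm with ⟨rfl, rfl⟩ | ⟨rfl, rfl⟩
      · rintro ⟨-, hc⟩
        exact absurd hc (not_le.mpr h.2)
      · rintro ⟨-, hc⟩
        rw [deleteEdge_symm', conn_symm, X.symm] at hc
        exact absurd hc (not_le.mpr h.2)
    · rintro ⟨hpos, -⟩
      rw [X.deleteEdge_υ, if_pos hm] at hpos
      exact lt_irrefl 0 hpos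
  · have hυ : (X.deleteEdge a b).υ x y = X.υ x y := X.deleteEdge_υ_of_ne hm
    constructor
    · rintro ⟨hpos, hc⟩
      refine ⟨by rwa [hυ], ?_⟩
      rw [hυ]
      refine le_trans (conn_anti ?_ x y) hc
      intro u v
      simp only [deleteEdge_υ]
      split_ifs
      · exact le_rfl
      · exact X.υ_nonneg u v
      · exact le_rfl
    · rintro ⟨hpos, hc⟩
      rw [hυ] at hpos
      refine ⟨hpos, ?_⟩
      set X' := X.deleteEdge a b with hX'
      set Y := X.deleteEdge x y with hY
      refine Y.conn_le (X.υ_nonneg x y) ?_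
      intro l hl
      by_cases hsle : Y.pathStrength l ≤ X.υ x y
      · exact hsle
      push_neg at hsle
      set s := Y.pathStrength l with hs_def
      -- the detour
      obtain ⟨D, hD, htD⟩ := X'.exists_path_of_lt_conn (X.υ_nonneg a b) h.2
      set t := X'.pathStrength D with ht_def
      set Y' := Y.deleteEdge a b with hY'
      set R := fun u v => 0 < Y'.υ u v ∧ s ≤ Y'.υ u v with hR
      have hRsymm : ∀ u v, R u v → R v u := by
        intro u v ⟨h1, h2⟩
        rw [hR]
        rw [Y'.symm] at h1 h2
        exact ⟨h1, h2⟩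
      have hDc1 : D.Chain' (fun u v => 0 < X'.υ u v) := hD.2.2.2.2
      have hDc2 : D.Chain' (fun u v => t ≤ X'.υ u v) :=
        (le_pathStrength_iff X' t D hD.2.2.2.1).mp le_rfl
      have hedge : ∀ u v, (0 < Y.υ u v ∧ s ≤ Y.υ u v) → ∃ w, IsWalk R u v w := by
        rintro u v ⟨hp, hsuv⟩
        by_cases hm2 : (u = a ∧ v = b) ∨ (u = b ∧ v = a)
        · have hnotxy : ¬ ((u = x ∧ v = y) ∨ (u = y ∧ v = x)) := by
            intro hcon
            rw [hY, X.deleteEdge_υ, if_pos hcon] at hp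
            exact lt_irrefl 0 hp
          have hYuv : Y.υ u v = X.υ u v := by
            rw [hY, X.deleteEdge_υ, if_neg hnotxy]
          have hsab : s ≤ X.υ a b := by
            rcases hm2 with ⟨rfl, rfl⟩ | ⟨rfl, rfl⟩
            · rw [hYuv] at hsuv; exact hsuv
            · rw [hYuv, X.symm] at hsuv; exact hsuv
          have hDwalk : IsWalk R a b D := by
            refine ⟨hD.2.1, hD.2.2.1, ?_⟩
            refine (chain'_and' hDc1 hDc2).imp ?_
            rintro p q ⟨hq1, hq2⟩
            have hnab : ¬ ((p = a ∧ q = b) ∨ (p = b ∧ q = a)) := by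
              intro hcon
              rw [hX', X.deleteEdge_υ, if_pos hcon] at hq1
              exact lt_irrefl 0 hq1
            have hval : X'.υ p q = X.υ p q := by
              rw [hX', X.deleteEdge_υ, if_neg hnab]
            have hnxy : ¬ ((p = x ∧ q = y) ∨ (p = y ∧ q = x)) := by
              intro hcon
              have hxyval : X.υ p q = X.υ x y := by
                rcases hcon with ⟨rfl, rfl⟩ | ⟨rfl, rfl⟩
                · rfl
                · exact X.symm p q
              rw [hval, hxyval] at hq2
              -- t ≤ υ x y < s ≤ υ a b < t
              exact absurd (hq2.trans_lt hsle) (not_lt.mpr (le_of_lt (hsab.trans_lt htD)))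
            have hYq : Y'.υ p q = X.υ p q := by
              rw [hY', deleteEdge_υ, if_neg hnab, hY, X.deleteEdge_υ, if_neg hnxy]
            rw [hval] at hq1 hq2
            show 0 < Y'.υ p q ∧ s ≤ Y'.υ p q
            rw [hYq]
            exact ⟨hq1, ((hsab.trans htD.le).trans hq2)⟩
          rcases hm2 with ⟨rfl, rfl⟩ | ⟨rfl, rfl⟩
          · exact ⟨D, hDwalk⟩
          · exact ⟨D.reverse, isWalk_reverse hRsymm hDwalk⟩
        · have hYq : Y'.υ u v = Y.υ u v := by
            rw [hY', deleteEdge_υ, if_neg hm2]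
          refine ⟨[u, v], isWalk_pair ?_⟩
          show 0 < Y'.υ u v ∧ s ≤ Y'.υ u v
          rw [hYq]
          exact ⟨hp, hsuv⟩
      have hlc : l.Chain' (fun u v => 0 < Y.υ u v ∧ s ≤ Y.υ u v) :=
        chain'_and' hl.2.2.2.2 ((le_pathStrength_iff Y s l hl.2.2.2.1).mp le_rfl)
      obtain ⟨w, hw⟩ := isWalk_of_chain' hedge l x y hl.2.1 hl.2.2.1 hlc
      have hxy : x ≠ y := Y.head_ne_last_of_path hl
      obtain ⟨p, hnd, hph, hpl, hplen, hpc⟩ := isWalk_to_path hw hxy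
      have hpPath : Y'.IsPath x y p :=
        ⟨hnd, hph, hpl, hplen, hpc.imp fun u v h' => h'.1⟩
      have hsP : s ≤ Y'.pathStrength p :=
        (le_pathStrength_iff Y' s p hplen).mpr (hpc.imp fun u v h' => h'.2)
      have hconn : s ≤ Y'.conn x y := hsP.trans (Y'.le_conn hpPath)
      have hYY : Y' = X'.deleteEdge x y := by
        rw [hY', hY, hX']
        exact (X.deleteEdge_comm a b x y).symm
      rw [hYY] at hconn
      exact hconn.trans (hc.trans_eq hυ)

end FuzzyGraph

/-- Deleting a δ-edge does not change the strong domination index. -/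
theorem FuzzyGraph.SDI_deleteEdge_of_deltaEdge {V : Type*} [Fintype V] [DecidableEq V]
    (X : FuzzyGraph V) {a b : V} (h : X.DeltaEdge a b) :
    X.SDI = (X.deleteEdge a b).SDI := by
  set X' := X.deleteEdge a b with hX'
  have hse : ∀ u v, X.StrongEdge u v ↔ X'.StrongEdge u v :=
    fun u v => strongEdge_deleteEdge_iff h u v
  have hυeq : ∀ u v, X.StrongEdge u v → X'.υ u v = X.υ u v := by
    intro u v hs
    have hs' := (hse u v).mp hs
    refine X.deleteEdge_υ_of_ne ?_
    intro hcon
    have := hs'.1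
    rw [hX', X.deleteEdge_υ, if_pos hcon] at this
    exact lt_irrefl 0 this
  have hmin : ∀ u, X.minInc u = X'.minInc u := by
    intro u
    unfold minInc
    congr 1
    ext w
    constructor
    · rintro ⟨c, hc, rfl⟩
      exact ⟨c, (hse u c).mp hc, (hυeq u c hc).symm⟩
    · rintro ⟨c, hc, rfl⟩
      exact ⟨c, (hse u c).mpr hc, (hυeq u c ((hse u c).mpr hc))⟩
  have hweight : ∀ S : Finset V, X.weight S = X'.weight S := by
    intro S
    unfold weight
    exact Finset.sum_congr rfl fun u _ => hmin u
  have hsds : ∀ D : Finset V, X.IsSDS D ↔ X'.IsSDS D := by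
    intro D
    unfold IsSDS
    constructor
    · intro hD v hv
      obtain ⟨c, hc, hsc⟩ := hD v hv
      exact ⟨c, hc, (hse c v).mp hsc⟩
    · intro hD v hv
      obtain ⟨c, hc, hsc⟩ := hD v hv
      exact ⟨c, hc, (hse c v).mpr hsc⟩
  have hmsds : ∀ D : Finset V, X.IsMinimalSDS D ↔ X'.IsMinimalSDS D := by
    intro D
    unfold IsMinimalSDS
    rw [hsds]
    constructor
    · rintro ⟨h1, h2⟩
      exact ⟨h1, fun c hc hcon => h2 c hc ((hsds _).mpr hcon)⟩
    · rintro ⟨h1, h2⟩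
      exact ⟨h1, fun c hc hcon => h2 c hc ((hsds _).mp hcon)⟩
  have hsd : ∀ u, X.sd u = X'.sd u := by
    intro u
    unfold sd
    congr 1
    ext w
    constructor
    · rintro ⟨D, hD, hu, rfl⟩
      exact ⟨D, (hmsds D).mp hD, hu, hweight D⟩
    · rintro ⟨D, hD, hu, rfl⟩
      exact ⟨D, (hmsds D).mpr hD, hu, (hweight D).symm⟩
  unfold SDI
  exact Finset.sum_congr rfl fun u _ => hsd u
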